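/- Let n = 3ν with ν ≥ 3 and n odd. Define a¹ = (1,0,0,1,0,0,…,1,0,0) ∈ {0,1}ⁿ and a^i its rotation by i−1 positions, and w^i = 1 − a^i for i = 1,2,3. Then each w^i is a vertex of Q(C(n,2)) with w^i·1 = 2ν, every other vertex v of Q(C(n,2)) not among w¹,w²,w³ satisfies v·1 ≤ 2ν − 1, and for i ≠ j the vertices w^i and w^j are not adjacent in Q(C(n,2)). -/

import Mathlib

open Finset

/-- Support of a vector. -/
def supp {n : ℕ} (x : Fin n → ℝ) : Set (Fin n) := {j | x j ≠ 0}

/-- Support of the `t`-th row of a matrix. -/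
def rowSupp {m n : ℕ} (A : Matrix (Fin m) (Fin n) ℝ) (t : Fin m) : Set (Fin n) :=
  {j | A t j ≠ 0}

def IsBinaryMatrix {m n : ℕ} (A : Matrix (Fin m) (Fin n) ℝ) : Prop :=
  ∀ t j, A t j = 0 ∨ A t j = 1

def IsBinaryVec {n : ℕ} (x : Fin n → ℝ) : Prop := ∀ j, x j = 0 ∨ x j = 1

/-- The polyhedron `{x | A x ≥ b, x ≥ 0}`. -/
def polyP {m n : ℕ} (A : Matrix (Fin m) (Fin n) ℝ) (b : Fin m → ℝ) : Set (Fin n → ℝ) :=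
  {x | (∀ i, b i ≤ ∑ j, A i j * x j) ∧ ∀ j, 0 ≤ x j}

/-- The linear relaxation `Q(A) = {x | A x ≥ 1, x ≥ 0}`. -/
def polyQ {m n : ℕ} (A : Matrix (Fin m) (Fin n) ℝ) : Set (Fin n → ℝ) :=
  {x | (∀ i, 1 ≤ ∑ j, A i j * x j) ∧ ∀ j, 0 ≤ x j}

/-- The set covering polyhedron `Q*(A)`: convex hull of nonnegative integer solutions of
`A x ≥ 1`. -/
def Qstar {m n : ℕ} (A : Matrix (Fin m) (Fin n) ℝ) : Set (Fin n → ℝ) :=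
  convexHull ℝ {x | (∀ j, ∃ k : ℕ, x j = k) ∧ ∀ i, 1 ≤ ∑ j, A i j * x j}

/-- A vertex of a convex set is an extreme point. -/
def IsVertex {n : ℕ} (S : Set (Fin n → ℝ)) (v : Fin n → ℝ) : Prop :=
  v ∈ S.extremePoints ℝ

/-- Two distinct vertices are adjacent when they lie on a common edge, i.e. the segment
joining them is a face (extreme subset) of `S`. -/
def AdjacentVerts {n : ℕ} (S : Set (Fin n → ℝ)) (v w : Fin n → ℝ) : Prop :=
  v ≠ w ∧ IsVertex S v ∧ IsVertex S w ∧ IsExtreme ℝ S (segment ℝ v w)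

/-- There is a row support `C` with `C ∩ supp v = {p}` and `C ∩ supp v' = {p'}`. -/
def jsgEdge {m n : ℕ} (A : Matrix (Fin m) (Fin n) ℝ) (v v' : Fin n → ℝ)
    (p p' : Fin n) : Prop :=
  ∃ t, rowSupp A t ∩ supp v = {p} ∧ rowSupp A t ∩ supp v' = {p'}

/-- The joint saturation graph of `v` and `v'` with respect to `A`. -/
def JSG {m n : ℕ} (A : Matrix (Fin m) (Fin n) ℝ) (v v' : Fin n → ℝ) :
    SimpleGraph (Fin n) where
  Adj p p' := p ≠ p' ∧ (jsgEdge A v v' p p' ∨ jsgEdge A v v' p' p)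
  symm := ⟨fun p p' h => ⟨h.1.symm, h.2.symm⟩⟩
  loopless := ⟨fun p h => h.1 rfl⟩

/-- The node set of the joint saturation graph: the symmetric difference of the supports. -/
def jsgNodes {n : ℕ} (v v' : Fin n → ℝ) : Set (Fin n) :=
  (supp v \ supp v') ∪ (supp v' \ supp v)

def JSGConnected {m n : ℕ} (A : Matrix (Fin m) (Fin n) ℝ) (v v' : Fin n → ℝ) : Prop :=
  ∀ p ∈ jsgNodes v v', ∀ q ∈ jsgNodes v v', (JSG A v v').Reachable p q

/-- One of the two partite sets is contained in a single connected component. -/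
def JSGPartiteConnected {m n : ℕ} (A : Matrix (Fin m) (Fin n) ℝ) (v v' : Fin n → ℝ) : Prop :=
  (∀ p ∈ supp v \ supp v', ∀ q ∈ supp v \ supp v', (JSG A v v').Reachable p q) ∨
  (∀ p ∈ supp v' \ supp v, ∀ q ∈ supp v' \ supp v, (JSG A v v').Reachable p q)

/-- Exactly two components, one of which is an isolated node. -/
def JSGAlmostConnected {m n : ℕ} (A : Matrix (Fin m) (Fin n) ℝ) (v v' : Fin n → ℝ) : Prop :=
  ∃ q ∈ jsgNodes v v', (∀ p, ¬ (JSG A v v').Adj q p) ∧ (jsgNodes v v' \ {q}).Nonempty ∧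
    ∀ p ∈ jsgNodes v v' \ {q}, ∀ r ∈ jsgNodes v v' \ {q}, (JSG A v v').Reachable p r

/-- The (directed) circular arc from `i` to `j` in `Fin n`. -/
def arc {n : ℕ} [NeZero n] (i j : Fin n) : Set (Fin n) :=
  {k | ∃ h : ℕ, h ≤ ((j - i : Fin n) : ℕ) ∧ k = i + Fin.ofNat n h}

/-- A matrix is row circular if each row support is a circular arc. -/
def RowCircular {m n : ℕ} [NeZero n] (A : Matrix (Fin m) (Fin n) ℝ) : Prop :=
  ∀ t, ∃ i j : Fin n, rowSupp A t = arc i j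

/-- The standard assumptions: binary, no dominating rows, between 2 and n-1 ones per row,
no all-zero or all-one column. -/
def StandardAssumptions {m n : ℕ} (A : Matrix (Fin m) (Fin n) ℝ) : Prop :=
  IsBinaryMatrix A ∧
  (∀ s t : Fin m, s ≠ t → ¬ rowSupp A s ⊆ rowSupp A t) ∧
  (∀ t, 2 ≤ (rowSupp A t).ncard ∧ (rowSupp A t).ncard ≤ n - 1) ∧
  (∀ j : Fin n, (∃ t, A t j ≠ 0) ∧ (∃ t, A t j = 0))

/-- `a` and `b` occur consecutively (in either order) in the list `l`. -/
def ListConsec {α : Type*} (l : List α) (a b : α) : Prop :=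
  ∃ k : ℕ, (l[k]? = some a ∧ l[k+1]? = some b) ∨ (l[k]? = some b ∧ l[k+1]? = some a)

/-- `a` and `b` occur cyclically consecutively (in either order) in the list `l`. -/
def CycConsec {α : Type*} (l : List α) (a b : α) : Prop :=
  ∃ k : ℕ, k < l.length ∧
    ((l[k]? = some a ∧ l[(k+1) % l.length]? = some b) ∨
     (l[k]? = some b ∧ l[(k+1) % l.length]? = some a))

/-- The set `S` induces a path (possibly a single node) in `G`. -/
def IsPathOn {n : ℕ} (G : SimpleGraph (Fin n)) (S : Set (Fin n)) : Prop :=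
  ∃ l : List (Fin n), l.Nodup ∧ (∀ x, x ∈ S ↔ x ∈ l) ∧
    (∀ a b, a ∈ S → G.Adj a b → ListConsec l a b) ∧
    (∀ a b, ListConsec l a b → G.Adj a b)

/-- The set `S` induces a cycle in `G`. -/
def IsCycleOn {n : ℕ} (G : SimpleGraph (Fin n)) (S : Set (Fin n)) : Prop :=
  ∃ l : List (Fin n), 3 ≤ l.length ∧ l.Nodup ∧ (∀ x, x ∈ S ↔ x ∈ l) ∧
    (∀ a b, a ∈ S → G.Adj a b → CycConsec l a b) ∧
    (∀ a b, CycConsec l a b → G.Adj a b)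

/-- `p` and `q` are cyclically consecutive elements of `S`. -/
def CyclConsecIn {n : ℕ} [NeZero n] (S : Set (Fin n)) (p q : Fin n) : Prop :=
  p ≠ q ∧ p ∈ S ∧ q ∈ S ∧ (arc p q ∩ S = {p, q} ∨ arc q p ∩ S = {p, q})

/-- The circulant matrix `C(n,2)` with row supports `{t, t+1}` (mod n). -/
def Cn2 (n : ℕ) [NeZero n] : Matrix (Fin n) (Fin n) ℝ :=
  fun t j => if j = t ∨ j = t + 1 then 1 else 0

/-- Append a row to a matrix. -/
def appendRow {m n : ℕ} (A : Matrix (Fin m) (Fin n) ℝ) (a : Fin n → ℝ) :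
    Matrix (Fin (m+1)) (Fin n) ℝ :=
  fun t j => if h : (t : ℕ) < m then A ⟨t, h⟩ j else a j

/-- A set of points is integral if all its extreme points are integer vectors. -/
def IsIntegralSet {n : ℕ} (S : Set (Fin n → ℝ)) : Prop :=
  ∀ x ∈ S.extremePoints ℝ, ∀ j, ∃ z : ℤ, x j = z

/-- A binary matrix is minimally nonideal if `Q(A)` is not integral but both restrictions
`Q(A) ∩ {x_i = 0}` and `Q(A) ∩ {x_i = 1}` are integral for every coordinate `i`. -/
def MinimallyNonideal {m n : ℕ} (A : Matrix (Fin m) (Fin n) ℝ) : Prop :=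
  ¬ IsIntegralSet (polyQ A) ∧
  ∀ i : Fin n, IsIntegralSet (polyQ A ∩ {x | x i = 0}) ∧
               IsIntegralSet (polyQ A ∩ {x | x i = 1})

/-- The matrix of the degenerate projective plane with `t+1` points and lines. -/
def Jmat (t : ℕ) : Matrix (Fin (t+1)) (Fin (t+1)) ℝ :=
  fun i j => if i = 0 then (if j = 0 then 0 else 1) else (if j = 0 ∨ j = i then 1 else 0)

/-- `A` is isomorphic to some degenerate projective plane matrix `J_t`, `t ≥ 2`. -/
def IsoToDegenProjPlane {m n : ℕ} (A : Matrix (Fin m) (Fin n) ℝ) : Prop :=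
  ∃ t : ℕ, 2 ≤ t ∧ ∃ (σ : Fin m ≃ Fin (t+1)) (τ : Fin n ≃ Fin (t+1)),
    ∀ i j, A i j = Jmat t (σ i) (τ j)

/-- `A₁` is the core of `A`: a square nonsingular row submatrix with `r` ones per row and
per column, all other rows of `A` having more than `r` ones. -/
def IsCore {m n : ℕ} (A : Matrix (Fin m) (Fin n) ℝ) (A₁ : Matrix (Fin n) (Fin n) ℝ)
    (r : ℕ) : Prop :=
  2 ≤ r ∧ A₁.det ≠ 0 ∧
  (∃ f : Fin n → Fin m, Function.Injective f ∧ (∀ i, A₁ i = A (f i)) ∧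
    ∀ t, t ∉ Set.range f → r < (rowSupp A t).ncard) ∧
  (∀ i, (rowSupp A₁ i).ncard = r) ∧ (∀ j, {i | A₁ i j ≠ 0}.ncard = r)

/-- `B₁` is the core of the blocker of `A`: a square nonsingular matrix whose rows are
binary vertices of `Q*(A)` with `s` ones per row and per column, all other binary
vertices of `Q*(A)` having more than `s` ones. -/
def IsBlockerCore {m n : ℕ} (A : Matrix (Fin m) (Fin n) ℝ) (B₁ : Matrix (Fin n) (Fin n) ℝ)
    (s : ℕ) : Prop :=
  2 ≤ s ∧ B₁.det ≠ 0 ∧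
  (∀ i, IsBinaryVec (B₁ i) ∧ IsVertex (Qstar A) (B₁ i)) ∧
  Function.Injective (fun i => B₁ i) ∧
  (∀ i, (rowSupp B₁ i).ncard = s) ∧ (∀ j, {i | B₁ i j ≠ 0}.ncard = s) ∧
  (∀ x, IsBinaryVec x → IsVertex (Qstar A) x → (∀ i, x ≠ B₁ i) → s < (supp x).ncard)

/-- `w^i` for `n = 3ν`: the complement of the characteristic vector of the residue class
`i` mod 3. -/
def wVec (n : ℕ) (i : Fin 3) : Fin n → ℝ :=
  fun k => if (k : ℕ) % 3 = (i : ℕ) then 0 else 1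

/-- `a^i` for `n = 3ν`: the characteristic vector of the residue class `i` mod 3
(`a¹ = (1,0,0,1,0,0,…)` corresponds to `i = 0`). -/
def aVec (n : ℕ) (i : ℕ) : Fin n → ℝ :=
  fun k => if (k : ℕ) % 3 = i then 1 else 0

section aux
variable {n : ℕ} [NeZero n]

lemma val_succ (h1 : 1 < n) (t : Fin n) : ((t+1 : Fin n) : ℕ) = (t.val + 1) % n := by
  rw [Fin.val_add, Fin.val_one']
  rw [Nat.mod_eq_of_lt h1]

lemma finSuccNe (h1 : 1 < n) (t : Fin n) : t + 1 ≠ t := by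
  intro h
  have h2 := congrArg Fin.val h
  rw [val_succ h1] at h2
  have hlt := t.isLt
  rcases Nat.lt_or_ge (t.val+1) n with h3 | h3
  · rw [Nat.mod_eq_of_lt h3] at h2; omega
  · have h4 : t.val + 1 = n := by omega
    rw [h4, Nat.mod_self] at h2; omega
lemma rowsum (h1 : 1 < n) (x : Fin n → ℝ) (t : Fin n) :
    ∑ j, Cn2 n t j * x j = x t + x (t+1) := by
  have hne : t ≠ t + 1 := (finSuccNe h1 t).symm
  have : ∀ j, Cn2 n t j * x j = (if j = t then x j else 0) + (if j = t + 1 then x j else 0) := by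
    intro j
    unfold Cn2
    split_ifs with h h2 h3 h4 h5 <;> simp_all
  simp only [this, Finset.sum_add_distrib, Finset.sum_ite_eq' Finset.univ]
  simp

lemma mem_polyQ_iff (h1 : 1 < n) (x : Fin n → ℝ) :
    x ∈ polyQ (Cn2 n) ↔ (∀ t, 1 ≤ x t + x (t+1)) ∧ ∀ j, 0 ≤ x j := by
  unfold polyQ
  simp only [Set.mem_setOf_eq]
  constructor
  · rintro ⟨h, h'⟩; exact ⟨fun t => (rowsum h1 x t) ▸ h t, h'⟩
  · rintro ⟨h, h'⟩; exact ⟨fun t => (rowsum h1 x t).symm ▸ h t, h'⟩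

end aux

section aux2
variable {n : ℕ} [NeZero n]

lemma ressucc (h3 : n % 3 = 0) (h1 : 1 < n) (t : Fin n) :
    ((t+1 : Fin n) : ℕ) % 3 = (t.val + 1) % 3 := by
  rw [val_succ h1, Nat.mod_mod_of_dvd _ (by omega : 3 ∣ n)]

lemma respred (h3 : n % 3 = 0) (h1 : 1 < n) (t : Fin n) :
    ((t - 1 : Fin n) : ℕ) % 3 = (t.val + 2) % 3 := by
  rw [Fin.sub_def, Nat.mod_mod_of_dvd _ (by omega : 3 ∣ n), Fin.val_one']
  rw [Nat.mod_eq_of_lt h1]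
  have := t.isLt
  omega

lemma w_mem (h3 : n % 3 = 0) (h1 : 1 < n) (i : Fin 3) : wVec n i ∈ polyQ (Cn2 n) := by
  rw [mem_polyQ_iff h1]
  constructor
  · intro t
    have hr := ressucc h3 h1 t
    unfold wVec
    split_ifs with ha hb hb <;> try norm_num
    · -- both zero impossible
      exfalso; omega
  · intro j; unfold wVec; split_ifs <;> norm_num

/-- Binary feasible points where every 1 has a 0-neighbor are vertices. -/
lemma binary_vertex (h1 : 1 < n) (v : Fin n → ℝ) (hb : IsBinaryVec v)
    (hm : v ∈ polyQ (Cn2 n))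
    (hone : ∀ j, v j = 1 → v (j+1) = 0 ∨ v (j-1) = 0) :
    IsVertex (polyQ (Cn2 n)) v := by
  rw [IsVertex, mem_extremePoints]
  refine ⟨hm, ?_⟩
  intro x hx y hy hseg
  obtain ⟨a, b, ha, hb', hab, heq⟩ := hseg
  have heq' : ∀ q, a * x q + b * y q = v q := fun q => congrFun heq q
  have hx' := (mem_polyQ_iff h1 x).mp hx
  have hy' := (mem_polyQ_iff h1 y).mp hy
  have hzero : ∀ q, v q = 0 → x q = 0 ∧ y q = 0 := by
    intro q hq
    have h := heq' q
    have := hx'.2 q; have := hy'.2 q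
    constructor <;> nlinarith
  have hones : ∀ q, v q = 1 → x q = 1 ∧ y q = 1 := by
    intro q hq
    have hxq1 : 1 ≤ x q ∧ 1 ≤ y q := by
      rcases hone q hq with h0 | h0
      · have hx1 := hx'.1 q
        have hy1 := hy'.1 q
        have hz := hzero _ h0
        constructor <;> linarith [hz.1, hz.2]
      · have hx1 := hx'.1 (q - 1)
        have hy1 := hy'.1 (q - 1)
        have hz := hzero _ h0
        rw [sub_add_cancel] at hx1 hy1
        constructor <;> linarith [hz.1, hz.2]
    have h := heq' q
    constructor <;> nlinarith [hxq1.1, hxq1.2]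
  have hxv : x = v := by
    funext q
    rcases hb q with h | h
    · rw [h]; exact (hzero q h).1
    · rw [h]; exact (hones q h).1
  have hyv : y = v := by
    funext q
    rcases hb q with h | h
    · rw [h]; exact (hzero q h).2
    · rw [h]; exact (hones q h).2
  exact ⟨hxv, hyv⟩

end aux2

section classify
variable {n : ℕ} [NeZero n]

lemma two_step (h1 : 1 < n) (v : Fin n → ℝ)
    (hall : ∀ t : Fin n, v t + v (t+1) = 1) (j : Fin n) : v (j + 1 + 1) = v j := by
  have ha := hall j
  have hb := hall (j + 1)
  linarith

open Fin.CommRing in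
lemma all_tight_half (hodd : Odd n) (h1 : 1 < n) (v : Fin n → ℝ)
    (hall : ∀ t : Fin n, v t + v (t+1) = 1) : v = fun _ => (1/2 : ℝ) := by
  have h2k : ∀ (m : ℕ) (j : Fin n), v (j + ((2*m : ℕ) : Fin n)) = v j := by
    intro m
    induction m with
    | zero => intro j; simp
    | succ m ih =>
      intro j
      have hc : ((2*(m+1) : ℕ) : Fin n) = ((2*m : ℕ) : Fin n) + 1 + 1 := by
        push_cast; ring
      rw [hc, ← add_assoc, ← add_assoc, two_step h1 v hall, ih]
  obtain ⟨k, hk⟩ := hodd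
  have hm0 : 2 * (k + 1) = n + 1 := by omega
  have hone : ((2*(k+1) : ℕ) : Fin n) = 1 := by
    rw [hm0]; push_cast; simp
  have hstep : ∀ j : Fin n, v (j + 1) = v j := by
    intro j
    have := h2k (k+1) j
    rwa [hone] at this
  funext j
  have := hall j
  rw [hstep j] at this
  linarith

open Fin.CommRing in
lemma classify (hodd : Odd n) (h1 : 1 < n) (v : Fin n → ℝ)
    (hv : IsVertex (polyQ (Cn2 n)) v) :
    IsBinaryVec v ∨ v = fun _ => (1/2 : ℝ) := by
  rw [IsVertex, mem_extremePoints] at hv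
  obtain ⟨hmem, hext⟩ := hv
  obtain ⟨hrow, hpos⟩ := (mem_polyQ_iff h1 v).mp hmem
  by_cases hall : ∀ t : Fin n, v t + v (t+1) = 1
  · exact Or.inr (all_tight_half hodd h1 v hall)
  left
  by_contra hbin
  have hp : ∃ p, v p ≠ 0 ∧ v p ≠ 1 := by
    unfold IsBinaryVec at hbin
    push_neg at hbin
    obtain ⟨p, hp1, hp2⟩ := hbin
    exact ⟨p, hp1, hp2⟩
  obtain ⟨p, hp0, hp1⟩ := hp
  obtain ⟨e, he⟩ := not_forall.mp hall
  have hse : 1 < v e + v (e+1) := lt_of_le_of_ne (hrow e) (Ne.symm he)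
  -- the alternating sign function
  set s : Fin n → ℝ := fun q => if Even ((q - (e+1) : Fin n) : ℕ) then 1 else -1 with hs
  have hsval : ∀ q, s q = 1 ∨ s q = -1 := by
    intro q; rw [hs]; dsimp only; split_ifs <;> simp
  have hflip : ∀ t : Fin n, t ≠ e → s (t+1) = - s t := by
    intro t ht
    have hww : (t + 1 - (e+1) : Fin n) = (t - (e+1)) + 1 := by ring
    have hne0 : (t - (e+1) : Fin n) + 1 ≠ 0 := by
      intro h
      apply ht
      have : (t - (e+1) : Fin n) + 1 + (e + 1) = 0 + (e+1) := by rw [h]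
      rw [zero_add] at this
      have h2 : t + 1 = e + 1 := by rw [← this]; ring
      have := add_right_cancel h2
      exact this
    have hvalinc : ((t - (e+1) : Fin n) + 1 : Fin n).val = ((t - (e+1) : Fin n)).val + 1 := by
      set w := (t - (e+1) : Fin n)
      rw [val_succ h1]
      have hlt := w.isLt
      rcases Nat.lt_or_ge (w.val + 1) n with h3 | h3
      · exact Nat.mod_eq_of_lt h3
      · exfalso
        have h4 : w.val + 1 = n := by omega
        apply hne0
        apply Fin.ext
        rw [val_succ h1, h4, Nat.mod_self]
        rfl
    rw [hs]
    dsimp only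
    rw [hww, hvalinc]
    by_cases hev : Even ((t - (e+1) : Fin n)).val
    · rw [if_pos hev, if_neg (by rw [Nat.even_add_one]; exact not_not_intro hev)]
    · rw [if_neg hev, if_pos (Nat.even_add_one.mpr hev)]
      norm_num
  -- minimum positive coordinate
  have hne : (Finset.univ : Finset (Fin n)).Nonempty := univ_nonempty
  set δ : ℝ := Finset.univ.inf' hne (fun q => if v q = 0 then 1 else v q) with hδ
  have hδpos : 0 < δ := by
    rw [hδ, Finset.lt_inf'_iff]
    intro q _
    split_ifs with h
    · norm_num
    · exact lt_of_le_of_ne (hpos q) (Ne.symm h)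
  have hδle : ∀ q, v q ≠ 0 → δ ≤ v q := by
    intro q hq
    have h := Finset.inf'_le (f := fun q => if v q = 0 then 1 else v q)
      (Finset.mem_univ q)
    rw [if_neg hq] at h
    exact h
  -- minimum slack
  set εs : ℝ := Finset.univ.inf' hne
      (fun t => if v t + v (t+1) = 1 then 1 else v t + v (t+1) - 1) with hεs
  have hεspos : 0 < εs := by
    rw [hεs, Finset.lt_inf'_iff]
    intro t _
    split_ifs with h
    · norm_num
    · have := lt_of_le_of_ne (hrow t) (Ne.symm h); linarith
  have hεsle : ∀ t, v t + v (t+1) ≠ 1 → εs ≤ v t + v (t+1) - 1 := by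
    intro t htt
    have h := Finset.inf'_le
      (f := fun t => if v t + v (t+1) = 1 then 1 else v t + v (t+1) - 1)
      (Finset.mem_univ t)
    rw [if_neg htt] at h
    exact h
  set ε : ℝ := min δ εs / 2 with hε
  have hεpos : 0 < ε := by rw [hε]; positivity
  have hεδ : 2 * ε ≤ δ := by rw [hε]; have := min_le_left δ εs; linarith
  have hεε : 2 * ε ≤ εs := by rw [hε]; have := min_le_right δ εs; linarith
  set y : Fin n → ℝ := fun q => if v q ≠ 0 ∧ v q ≠ 1 then s q else 0 with hy
  have hybound : ∀ q, -1 ≤ y q ∧ y q ≤ 1 := by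
    intro q
    rw [hy]
    dsimp only
    split_ifs with h
    · rcases hsval q with h' | h' <;> rw [h'] <;> norm_num
    · norm_num
  have htightzero : ∀ t, v t + v (t+1) = 1 → y t + y (t+1) = 0 := by
    intro t ht
    by_cases hvt : v t = 0 ∨ v t = 1
    · have ha' : y t = 0 := by
        rw [hy]; dsimp only; rw [if_neg]; tauto
      have hb' : y (t+1) = 0 := by
        rw [hy]; dsimp only; rw [if_neg]
        rcases hvt with h | h
        · intro hc; exact hc.2 (by linarith)
        · intro hc; exact hc.1 (by linarith)
      rw [ha', hb', add_zero]
    · push_neg at hvt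
      have hft1 : v (t+1) ≠ 0 ∧ v (t+1) ≠ 1 := by
        constructor
        · intro h; exact hvt.2 (by linarith)
        · intro h; exact hvt.1 (by linarith)
      have hte : t ≠ e := by
        intro h; rw [h] at ht; exact he ht
      rw [hy]; dsimp only
      rw [if_pos ⟨hvt.1, hvt.2⟩, if_pos hft1, hflip t hte]
      ring
  have hmemper : ∀ σ : ℝ, σ = 1 ∨ σ = -1 →
      (fun q => v q + σ * ε * y q) ∈ polyQ (Cn2 n) := by
    intro σ hσ
    have hyval : ∀ q, y q = 0 ∨ y q = 1 ∨ y q = -1 := by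
      intro q
      rw [hy]; dsimp only
      split_ifs with h
      · rcases hsval q with h' | h' <;> rw [h'] <;> tauto
      · tauto
    have hprod : ∀ q, -ε ≤ σ * ε * y q ∧ σ * ε * y q ≤ ε := by
      intro q
      rcases hσ with h | h <;> subst h <;>
        rcases hyval q with h' | h' | h' <;> rw [h'] <;> constructor <;> linarith
    rw [mem_polyQ_iff h1]
    constructor
    · intro t
      by_cases ht : v t + v (t+1) = 1
      · have hz := htightzero t ht
        have : v t + σ * ε * y t + (v (t+1) + σ * ε * y (t+1))
            = v t + v (t+1) + σ * ε * (y t + y (t+1)) := by ring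
        rw [this, hz, ht]; norm_num
      · have hslack := hεsle t ht
        have hb1 := hprod t
        have hb2 := hprod (t+1)
        linarith [hb1.1, hb2.1]
    · intro q
      by_cases hq : v q ≠ 0 ∧ v q ≠ 1
      · have hδq := hδle q hq.1
        have hb := hprod q
        linarith [hb.1]
      · have : y q = 0 := by rw [hy]; dsimp only; rw [if_neg hq]
        rw [this]
        have := hpos q
        linarith
  have hxp := hmemper 1 (Or.inl rfl)
  have hxm := hmemper (-1) (Or.inr rfl)
  have hseg : v ∈ openSegment ℝ (fun q => v q + 1 * ε * y q) (fun q => v q + (-1) * ε * y q) := by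
    refine ⟨1/2, 1/2, by norm_num, by norm_num, by norm_num, ?_⟩
    funext q
    simp only [Pi.add_apply, Pi.smul_apply, smul_eq_mul]
    ring
  have hcon := hext _ hxp _ hxm hseg
  have hcon1 := congrFun hcon.1 p
  have hyp : y p = s p := by rw [hy]; dsimp only; rw [if_pos ⟨hp0, hp1⟩]
  rcases hsval p with h' | h' <;> rw [hyp, h'] at hcon1 <;> nlinarith [hεpos]

end classify

section ones
variable {n : ℕ} [NeZero n]

open Fin.CommRing in
lemma ones_zero_neighbor (h1 : 1 < n) (v : Fin n → ℝ)
    (hv : IsVertex (polyQ (Cn2 n)) v) (hb : IsBinaryVec v) :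
    ∀ j, v j = 1 → v (j+1) = 0 ∨ v (j-1) = 0 := by
  intro j hj
  by_contra hcon
  push_neg at hcon
  have hj1 : v (j+1) = 1 := (hb (j+1)).resolve_left hcon.1
  have hjm : v (j-1) = 1 := (hb (j-1)).resolve_left hcon.2
  rw [IsVertex, mem_extremePoints] at hv
  obtain ⟨hmem, hext⟩ := hv
  obtain ⟨hrow, hpos⟩ := (mem_polyQ_iff h1 v).mp hmem
  set x : Fin n → ℝ := fun q => if q = j then v q - 1/2 else v q with hx
  set x' : Fin n → ℝ := fun q => if q = j then v q + 1/2 else v q with hx'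
  have hjne : j + 1 ≠ j := finSuccNe h1 j
  have hxmem : x ∈ polyQ (Cn2 n) := by
    rw [mem_polyQ_iff h1]
    constructor
    · intro t
      by_cases ht : t = j
      · subst ht
        have h2 : x t = v t - 1/2 := by rw [hx]; simp
        have h3 : x (t+1) = v (t+1) := by rw [hx]; simp [hjne]
        rw [h2, h3, hj, hj1]; norm_num
      · by_cases ht' : t + 1 = j
        · have htj : t = j - 1 := by rw [← ht']; ring
          have h2 : x t = v t := by rw [hx]; simp [ht]
          have h3 : x (t+1) = v j - 1/2 := by rw [hx]; simp [ht']
          rw [h2, h3, htj, hjm, hj]; norm_num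
        · have h2 : x t = v t := by rw [hx]; simp [ht]
          have h3 : x (t+1) = v (t+1) := by rw [hx]; simp [ht']
          rw [h2, h3]; exact hrow t
    · intro q
      by_cases hq : q = j
      · subst hq; rw [hx]; simp [hj]; norm_num
      · rw [hx]; simp [hq]; exact hpos q
  have hx'mem : x' ∈ polyQ (Cn2 n) := by
    rw [mem_polyQ_iff h1]
    have hge : ∀ q, v q ≤ x' q := by
      intro q
      rw [hx']
      dsimp only
      split_ifs <;> linarith [le_refl (v q)]
    constructor
    · intro t
      have := hrow t
      linarith [hge t, hge (t+1)]
    · intro q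
      have := hpos q
      linarith [hge q]
  have hseg : v ∈ openSegment ℝ x x' := by
    refine ⟨1/2, 1/2, by norm_num, by norm_num, by norm_num, ?_⟩
    funext q
    simp only [Pi.add_apply, Pi.smul_apply, smul_eq_mul, hx, hx']
    split_ifs <;> ring
  have hcon2 := (hext x hxmem x' hx'mem hseg).1
  have := congrFun hcon2 j
  rw [hx] at this
  simp at this

lemma window (h1 : 1 < n) (v : Fin n → ℝ)
    (hv : IsVertex (polyQ (Cn2 n)) v) (hb : IsBinaryVec v) :
    ∀ t : Fin n, v t = 0 ∨ v (t+1) = 0 ∨ v (t+1+1) = 0 := by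
  intro t
  by_contra hcon
  push_neg at hcon
  obtain ⟨h0, hA, hB⟩ := hcon
  have h2 : v (t+1) = 1 := (hb (t+1)).resolve_left hA
  rcases ones_zero_neighbor h1 v hv hb (t+1) h2 with h | h
  · exact hB h
  · rw [add_sub_cancel_right] at h
    exact h0 h

lemma sum_shift {M : Type*} [AddCommMonoid M] (c : Fin n) (f : Fin n → M) :
    ∑ k, f (k + c) = ∑ k, f k :=
  Fintype.sum_equiv (Equiv.addRight c) _ _ (fun _ => rfl)

end ones

section sums
variable {n : ℕ} [NeZero n]

lemma sum_range_3 (g : ℕ → ℝ) (μ : ℕ) :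
    ∑ m ∈ Finset.range (3*μ), g (m % 3) = μ * (g 0 + g 1 + g 2) := by
  induction μ with
  | zero => simp
  | succ μ ih =>
    have h : 3*(μ+1) = (3*μ + 1 + 1) + 1 := by ring
    rw [h, Finset.sum_range_succ, Finset.sum_range_succ, Finset.sum_range_succ, ih]
    have e0 : (3*μ) % 3 = 0 := by omega
    have e1 : (3*μ + 1) % 3 = 1 := by omega
    have e2 : (3*μ + 1 + 1) % 3 = 2 := by omega
    rw [e0, e1, e2]
    push_cast
    ring

lemma w_sum (hn : n = 3 * ν) (i : Fin 3) : ∑ k, wVec n i k = (2 * ν : ℝ) := by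
  have : ∀ k : Fin n, wVec n i k = (fun m => if m % 3 = (i : ℕ) then (0:ℝ) else 1) (k.val % 3) := by
    intro k
    simp only [wVec, Nat.mod_mod_of_dvd _ (dvd_refl 3)]
  calc ∑ k, wVec n i k
      = ∑ m ∈ Finset.range n, (fun m => if m % 3 = (i : ℕ) then (0:ℝ) else 1) (m % 3) := by
        rw [← Fin.sum_univ_eq_sum_range]
        exact Finset.sum_congr rfl (fun k _ => this k)
    _ = (2 * ν : ℝ) := by
        rw [hn]
        have hg := sum_range_3 (fun m => if m % 3 = (i : ℕ) then (0:ℝ) else 1) ν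
        rw [hg]
        have : (i : ℕ) < 3 := i.isLt
        interval_cases h : (i : ℕ) <;> norm_num <;> ring

end sums

section part3
variable {n ν : ℕ} [NeZero n]

open Fin.CommRing in
lemma binary_sum_bound (hn : n = 3 * ν) (hν : 3 ≤ ν) (v : Fin n → ℝ)
    (hv : IsVertex (polyQ (Cn2 n)) v) (hb : IsBinaryVec v)
    (hnw : ∀ i : Fin 3, v ≠ wVec n i) :
    ∑ k, v k ≤ (2 * ν : ℝ) - 1 := by
  have h1 : 1 < n := by omega
  have h3 : n % 3 = 0 := by omega
  set W : Fin n → ℕ := fun t =>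
    (if v t = 0 then 1 else 0) + (if v (t+1) = 0 then 1 else 0) +
      (if v (t+1+1) = 0 then 1 else 0) with hW
  set Z : ℕ := ∑ k, if v k = 0 then 1 else 0 with hZ
  have hWsum : ∑ t, W t = 3 * Z := by
    rw [hW]
    rw [Finset.sum_add_distrib, Finset.sum_add_distrib]
    have e1 : ∑ t : Fin n, (if v (t+1) = 0 then (1:ℕ) else 0)
        = ∑ t : Fin n, (if v t = 0 then (1:ℕ) else 0) :=
      sum_shift 1 (fun t => if v t = 0 then 1 else 0)
    have e2 : ∑ t : Fin n, (if v (t+1+1) = 0 then (1:ℕ) else 0)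
        = ∑ t : Fin n, (if v (t+1) = 0 then (1:ℕ) else 0) :=
      sum_shift 1 (fun t => if v (t+1) = 0 then 1 else 0)
    rw [e2, e1, hZ]
    ring
  have hW1 : ∀ t, 1 ≤ W t := by
    intro t
    rcases window h1 v hv hb t with h | h | h <;> simp [hW, h] <;> split_ifs <;> omega
  have hZν : ν + 1 ≤ Z := by
    by_cases hA : ∀ t, W t = 1
    · -- v must be some wVec : contradiction
      exfalso
      have hstep : ∀ q, v q = 0 → v (q+1) = 1 ∧ v (q+1+1) = 1 ∧ v (q+1+1+1) = 0 := by
        intro q hq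
        have hq1 : v (q+1) = 1 := by
          rcases hb (q+1) with h | h
          · exfalso; have := hA q; simp [hW, hq, h] at this
            try (split_ifs at this <;> omega)
          · exact h
        have hq2 : v (q+1+1) = 1 := by
          rcases hb (q+1+1) with h | h
          · exfalso; have := hA q; simp [hW, hq, h] at this
            try (split_ifs at this <;> omega)
          · exact h
        have hq3 : v (q+1+1+1) = 0 := by
          rcases hb (q+1+1+1) with h | h
          · exact h
          · exfalso
            have := hA (q+1)
            simp [hW, hq1, hq2, h] at this
        exact ⟨hq1, hq2, hq3⟩
      -- there is a zero
      have hzero : ∃ j, v j = 0 := by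
        by_contra hno
        push_neg at hno
        have := hA 0
        simp [hW, hno] at this
      obtain ⟨j, hj⟩ := hzero
      have hiter : ∀ m : ℕ, v (j + ((3*m : ℕ) : Fin n)) = 0 := by
        intro m
        induction m with
        | zero => simpa using hj
        | succ m ih =>
          have hc : (((3*(m+1) : ℕ)) : Fin n) = ((3*m : ℕ) : Fin n) + 1 + 1 + 1 := by
            push_cast; ring
          rw [hc, ← add_assoc, ← add_assoc, ← add_assoc]
          exact (hstep _ ih).2.2
      have hclass : ∀ x : Fin n, x.val % 3 = j.val % 3 → v x = 0 := by
        intro x hx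
        have hd3 : ((x - j : Fin n) : ℕ) % 3 = 0 := by
          rw [Fin.sub_def, Nat.mod_mod_of_dvd _ (by omega : 3 ∣ n)]
          have := j.isLt
          have := x.isLt
          omega
        have hdd : ((3 * (((x - j : Fin n) : ℕ) / 3) : ℕ) : Fin n) = x - j := by
          rw [show 3 * (((x - j : Fin n) : ℕ) / 3) = ((x - j : Fin n) : ℕ) from by omega]
          exact Fin.cast_val_eq_self _
        have := hiter (((x - j : Fin n) : ℕ) / 3)
        rw [hdd] at this
        rwa [show j + (x - j) = x from by ring] at this
      apply hnw ⟨j.val % 3, by omega⟩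
      funext k
      unfold wVec
      dsimp only
      by_cases hk : (k : ℕ) % 3 = j.val % 3
      · rw [if_pos hk]
        exact hclass k hk
      · rw [if_neg hk]
        rcases hb k with h0 | h1'
        · exfalso
          have r1 : ((k+1 : Fin n) : ℕ) % 3 = (k.val + 1) % 3 := ressucc h3 h1 k
          have r2 : ((k+1+1 : Fin n) : ℕ) % 3 = (k.val + 2) % 3 := by
            have a := ressucc h3 h1 (k+1)
            have b := ressucc h3 h1 k
            omega
          have hs := hstep k h0
          have hj3 : j.val % 3 < 3 := by omega
          have hk3 : k.val % 3 < 3 := by omega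
          rcases (by omega : (k.val + 1) % 3 = j.val % 3 ∨ (k.val + 2) % 3 = j.val % 3) with h | h
          · have := hclass (k+1) (by rw [r1]; exact h)
            rw [hs.1] at this; norm_num at this
          · have := hclass (k+1+1) (by rw [r2]; exact h)
            rw [hs.2.1] at this; norm_num at this
        · exact h1'
    · push_neg at hA
      obtain ⟨t0, ht0⟩ := hA
      have ht2 : 2 ≤ W t0 := by
        have := hW1 t0
        omega
      have hlt : ∑ _t : Fin n, (1:ℕ) < ∑ t, W t :=
        Finset.sum_lt_sum (fun i _ => hW1 i) ⟨t0, Finset.mem_univ t0, by omega⟩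
      rw [Finset.sum_const, card_univ, Fintype.card_fin, smul_eq_mul, mul_one] at hlt
      omega
  -- now the sum bound
  have hv1 : ∀ k, v k = 1 - (if v k = 0 then (1:ℝ) else 0) := by
    intro k
    rcases hb k with h | h <;> simp [h]
  have hsum : ∑ k, v k = (n : ℝ) - (Z : ℝ) := by
    calc ∑ k, v k = ∑ k, (1 - (if v k = 0 then (1:ℝ) else 0)) :=
          Finset.sum_congr rfl (fun k _ => hv1 k)
      _ = (n : ℝ) - (Z : ℝ) := by
          rw [Finset.sum_sub_distrib, Finset.sum_const, card_univ, Fintype.card_fin, hZ]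
          rw [nsmul_eq_mul, mul_one]
          push_cast
          ring
  rw [hsum]
  have : (ν : ℝ) + 1 ≤ (Z : ℝ) := by exact_mod_cast hZν
  have hnr : (n : ℝ) = 3 * ν := by exact_mod_cast hn
  linarith

end part3

section part14
variable {n ν : ℕ} [NeZero n]

lemma w_binary (i : Fin 3) : IsBinaryVec (wVec n i) := by
  intro k; unfold wVec; split_ifs <;> simp

lemma w_vertex (hn : n = 3 * ν) (hν : 3 ≤ ν) (i : Fin 3) :
    IsVertex (polyQ (Cn2 n)) (wVec n i) := by
  have h1 : 1 < n := by omega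
  have h3 : n % 3 = 0 := by omega
  apply binary_vertex h1 _ (w_binary i) (w_mem h3 h1 i)
  intro j hj
  unfold wVec at hj ⊢
  have hr1 := ressucc h3 h1 j
  have hr2 := respred h3 h1 j
  have hi := i.isLt
  have hjne : (j : ℕ) % 3 ≠ (i : ℕ) := by
    intro h; rw [if_pos h] at hj; norm_num at hj
  rcases (by omega : ((j:ℕ) + 1) % 3 = (i:ℕ) ∨ ((j:ℕ) + 2) % 3 = (i:ℕ)) with h | h
  · left; rw [if_pos (by rw [hr1]; exact h)]
  · right; rw [if_pos (by rw [hr2]; exact h)]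

lemma adj_symm {S : Set (Fin n → ℝ)} {v w : Fin n → ℝ}
    (h : AdjacentVerts S v w) : AdjacentVerts S w v :=
  ⟨h.1.symm, h.2.2.1, h.2.1, by rw [segment_symm]; exact h.2.2.2⟩

lemma nonadj (hn : n = 3 * ν) (hν : 3 ≤ ν) (i : Fin 3) :
    ¬ AdjacentVerts (polyQ (Cn2 n)) (wVec n i) (wVec n (i+1)) := by
  have h1 : 1 < n := by omega
  have h3 : n % 3 = 0 := by omega
  have hi3 : (i:ℕ) < 3 := i.isLt
  have hi1 : ((i+1 : Fin 3) : ℕ) = ((i:ℕ)+1) % 3 := val_succ (by norm_num) i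
  rintro ⟨hne', hv1, hv2, hsub, hext⟩
  set p0 : Fin n := ⟨(i:ℕ), by omega⟩ with hp0
  have hp0v : (p0:ℕ) = (i:ℕ) := rfl
  have a0 : ((p0 + 1 : Fin n) : ℕ) = (i:ℕ) + 1 := by
    rw [val_succ h1, hp0v]; exact Nat.mod_eq_of_lt (by omega)
  have a1 : ((p0 + 1 + 1 : Fin n) : ℕ) = (i:ℕ) + 2 := by
    rw [val_succ h1, a0]; exact Nat.mod_eq_of_lt (by omega)
  have a2 : ((p0 + 1 + 1 + 1 : Fin n) : ℕ) = (i:ℕ) + 3 := by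
    rw [val_succ h1, a1]; exact Nat.mod_eq_of_lt (by omega)
  set u : Fin n → ℝ := fun q => if q = p0 then 1 else if q = p0+1 then -1 else 0 with hu
  set mm : Fin n → ℝ := fun q => (wVec n i q + wVec n (i+1) q)/2 with hmm
  have hwv : ∀ q : Fin n, wVec n i q = (if (q:ℕ) % 3 = (i:ℕ) then (0:ℝ) else 1) := fun q => rfl
  have hwv1 : ∀ q : Fin n, wVec n (i+1) q = (if (q:ℕ) % 3 = ((i:ℕ)+1)%3 then (0:ℝ) else 1) := by
    intro q; unfold wVec; rw [hi1]
  have hmval : ∀ q : Fin n,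
      ((q:ℕ) % 3 = (i:ℕ) → mm q = 1/2) ∧ ((q:ℕ) % 3 = ((i:ℕ)+1)%3 → mm q = 1/2) ∧
        ((q:ℕ) % 3 = ((i:ℕ)+2)%3 → mm q = 1) := by
    intro q
    rw [hmm]; dsimp only
    rw [hwv, hwv1]
    refine ⟨fun h => ?_, fun h => ?_, fun h => ?_⟩
    · rw [if_pos h, if_neg (by omega)]; norm_num
    · rw [if_neg (by omega), if_pos h]; norm_num
    · rw [if_neg (by omega), if_neg (by omega)]; norm_num
  have hmlb : ∀ q : Fin n, 1/2 ≤ mm q := by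
    intro q
    have hq3 : (q:ℕ) % 3 < 3 := by omega
    have := hmval q
    rcases (by omega : (q:ℕ) % 3 = (i:ℕ) ∨ (q:ℕ) % 3 = ((i:ℕ)+1)%3 ∨ (q:ℕ) % 3 = ((i:ℕ)+2)%3)
      with h | h | h
    · rw [this.1 h]
    · rw [this.2.1 h]
    · rw [this.2.2 h]; norm_num
  have huval : ∀ q, u q = 0 ∨ u q = 1 ∨ u q = -1 := by
    intro q; rw [hu]; dsimp only; split_ifs <;> tauto
  have hxmem : ∀ σ : ℝ, σ = 1 ∨ σ = -1 →
      (fun q => mm q + σ * (1/4) * u q) ∈ polyQ (Cn2 n) := by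
    intro σ hσ
    have hprod : ∀ q, -(1/4) ≤ σ * (1/4) * u q ∧ σ * (1/4) * u q ≤ 1/4 := by
      intro q
      rcases hσ with h | h <;> subst h <;>
        rcases huval q with h' | h' | h' <;> rw [h'] <;> norm_num
    rw [mem_polyQ_iff h1]
    constructor
    · intro t
      have hr1 : ((t+1 : Fin n) : ℕ) % 3 = ((t:ℕ) + 1) % 3 := ressucc h3 h1 t
      by_cases hr : (t:ℕ) % 3 = (i:ℕ)
      · have hmt : mm t = 1/2 := (hmval t).1 hr
        have hmt1 : mm (t+1) = 1/2 := (hmval (t+1)).2.1 (by omega)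
        by_cases htp : t = p0
        · have hut : u t = 1 := by rw [hu]; dsimp only; rw [if_pos htp]
          have hut1 : u (t+1) = -1 := by
            rw [hu]; dsimp only
            rw [if_neg, if_pos (by rw [htp])]
            · subst htp
              intro h
              have := congrArg Fin.val h
              rw [a0, hp0v] at this
              omega
          rw [hmt, hmt1, hut, hut1]
          ring_nf
          norm_num
        · have hut : u t = 0 := by
            rw [hu]; dsimp only
            rw [if_neg htp, if_neg]
            intro h
            have := congrArg Fin.val h
            rw [a0] at this
            omega
          have hut1 : u (t+1) = 0 := by
            rw [hu]; dsimp only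
            rw [if_neg, if_neg]
            · intro h
              exact htp (add_right_cancel h)
            · intro h
              have := congrArg Fin.val h
              rw [hp0v] at this
              omega
          rw [hmt, hmt1, hut, hut1]
          ring_nf
          norm_num
      · have hm32 : mm t + mm (t+1) = 3/2 := by
          have hq3 : (t:ℕ) % 3 < 3 := by omega
          rcases (by omega : (t:ℕ) % 3 = ((i:ℕ)+1)%3 ∨ (t:ℕ) % 3 = ((i:ℕ)+2)%3) with h | h
          · rw [(hmval t).2.1 h, (hmval (t+1)).2.2 (by omega)]; norm_num
          · rw [(hmval t).2.2 h, (hmval (t+1)).1 (by omega)]; norm_num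
        have hb1 := hprod t
        have hb2 := hprod (t+1)
        linarith [hb1.1, hb2.1]
    · intro q
      have := hmlb q
      have := (hprod q).1
      linarith
  have hx1 := hxmem 1 (Or.inl rfl)
  have hx2 := hxmem (-1) (Or.inr rfl)
  have hmseg : mm ∈ segment ℝ (wVec n i) (wVec n (i+1)) := by
    refine ⟨1/2, 1/2, by norm_num, by norm_num, by norm_num, ?_⟩
    funext q
    simp only [Pi.add_apply, Pi.smul_apply, smul_eq_mul, hmm]
    ring
  have hmopen : mm ∈ openSegment ℝ (fun q => mm q + 1 * (1/4) * u q)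
      (fun q => mm q + (-1) * (1/4) * u q) := by
    refine ⟨1/2, 1/2, by norm_num, by norm_num, by norm_num, ?_⟩
    funext q
    simp only [Pi.add_apply, Pi.smul_apply, smul_eq_mul]
    ring
  have hconc := hext hx1 hx2 hmseg hmopen
  obtain ⟨a, b, ha, hb, hab, heq⟩ := hconc
  have e1 := congrFun heq p0
  have e2 := congrFun heq (p0+1+1+1)
  simp only [Pi.add_apply, Pi.smul_apply, smul_eq_mul] at e1 e2
  have hw1 : wVec n i p0 = 0 := by rw [hwv, if_pos (by rw [hp0v]; omega)]
  have hw2 : wVec n (i+1) p0 = 1 := by rw [hwv1, if_neg (by rw [hp0v]; omega)]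
  have hw3 : wVec n i (p0+1+1+1) = 0 := by rw [hwv, if_pos (by rw [a2]; omega)]
  have hw4 : wVec n (i+1) (p0+1+1+1) = 1 := by rw [hwv1, if_neg (by rw [a2]; omega)]
  have hmp0 : mm p0 = 1/2 := (hmval p0).1 (by rw [hp0v]; omega)
  have hmq3 : mm (p0+1+1+1) = 1/2 := (hmval _).1 (by rw [a2]; omega)
  have hup0 : u p0 = 1 := by rw [hu]; dsimp only; rw [if_pos rfl]
  have huq3 : u (p0+1+1+1) = 0 := by
    rw [hu]; dsimp only
    rw [if_neg, if_neg]
    · intro h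
      have := congrArg Fin.val h
      rw [a2, a0] at this
      omega
    · intro h
      have := congrArg Fin.val h
      rw [a2, hp0v] at this
      omega
  rw [hw1, hw2, hmp0, hup0] at e1
  rw [hw3, hw4, hmq3, huq3] at e2
  -- e1 : a * 0 + b * 1 = 1/2 + 1 * (1/4) * 1 ; e2 : a * 0 + b * 1 = 1/2 + 1 * (1/4) * 0
  linarith

end part14


/-- for `n = 3ν` odd with `ν ≥ 3`, the vectors `w^i = 1 - a^i` are vertices
of `Q(C(n,2))` with coordinate sum `2ν`, every other vertex has sum at most `2ν - 1`,
and distinct `w^i`, `w^j` are not adjacent in `Q(C(n,2))`. -/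
theorem stmt17 {n ν : ℕ} [NeZero n] (hn : n = 3 * ν) (hν : 3 ≤ ν) (hodd : Odd n) :
    (∀ i : Fin 3, IsVertex (polyQ (Cn2 n)) (wVec n i)) ∧
    (∀ i : Fin 3, ∑ k, wVec n i k = (2 * ν : ℝ)) ∧
    (∀ v : Fin n → ℝ, IsVertex (polyQ (Cn2 n)) v → (∀ i : Fin 3, v ≠ wVec n i) →
      ∑ k, v k ≤ (2 * ν : ℝ) - 1) ∧
    (∀ i j : Fin 3, i ≠ j → ¬ AdjacentVerts (polyQ (Cn2 n)) (wVec n i) (wVec n j)) := by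
  have h1 : 1 < n := by omega
  refine ⟨fun i => w_vertex hn hν i, fun i => w_sum hn i, ?_, ?_⟩
  · intro v hv hnw
    rcases classify hodd h1 v hv with hb | hhalf
    · exact binary_sum_bound hn hν v hv hb hnw
    · subst hhalf
      rw [Finset.sum_const, card_univ, Fintype.card_fin, nsmul_eq_mul]
      have hnr : (n : ℝ) = 3 * ν := by exact_mod_cast hn
      have hνr : (3 : ℝ) ≤ ν := by exact_mod_cast hν
      rw [hnr]
      linarith
  · intro i j hij
    have tri : j = i + 1 ∨ i = j + 1 := by
      revert hij; fin_cases i <;> fin_cases j <;> decide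
    rcases tri with h | h
    · subst h; exact nonadj hn hν i
    · subst h; intro hadj; exact nonadj hn hν j (adj_symm hadj)
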